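/- Let G be a graph and P = v₀v₁…v_{h−1}v_h a degree-two-path with h ≥ 4 (v₀ and v_h have degree ≠ 2, and v₁,…,v_{h−1} have degree 2). Let G' be obtained from G by deleting v₂ and its incident edges v₁v₂, v₂v₃ and adding the edge v₁v₃. Then G has a set S of at most k vertices such that G − S is a disjoint union of paths if and only if G' has such a set. -/

import Mathlib

open SimpleGraph Walk

section helpers

variable {α : Type*} {A : SimpleGraph α} {c : α}


private def homOut (A : SimpleGraph α) (c : α) :
    A.comap (Subtype.val : {x : α // x ≠ c} → α) →g A := ⟨Subtype.val, fun h => h⟩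

private def liftW : ∀ {u w : α} (p : A.Walk u w) (hu : u ≠ c) (hw : w ≠ c)
    (h : ∀ x ∈ p.support, x ≠ c),
    (A.comap (Subtype.val : {x : α // x ≠ c} → α)).Walk ⟨u, hu⟩ ⟨w, hw⟩
  | _, _, Walk.nil, _, _, _ => Walk.nil
  | _, _, Walk.cons ha q, _, hw, h =>
      Walk.cons (by exact ha)
        (liftW q (h _ (by simp)) hw (fun x hx => h x (by simp [hx])))

private lemma liftW_map : ∀ {u w : α} (p : A.Walk u w) (hu : u ≠ c) (hw : w ≠ c)
    (h : ∀ x ∈ p.support, x ≠ c), (liftW p hu hw h).map (homOut A c) = p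
  | _, _, Walk.nil, _, _, _ => rfl
  | _, _, Walk.cons ha q, hu, hw, h => by
      rw [liftW]
      exact congrArg (Walk.cons ha) (liftW_map q _ _ _)

private lemma liftW_isCycle {c' : α} (p : A.Walk c' c') (hp : p.IsCycle) (hu : c' ≠ c)
    (h : ∀ x ∈ p.support, x ≠ c) : (liftW p hu hu h).IsCycle := by
  rw [← Walk.map_isCycle_iff_of_injective (p := liftW p hu hu h) (f := homOut A c)
    Subtype.val_injective, liftW_map]
  exact hp

private lemma cycle_decomp (w : A.Walk c c) (hw : w.IsCycle) :
    ∃ x y, A.Adj c x ∧ A.Adj c y ∧ x ≠ y ∧ ∃ r : A.Walk y x, c ∉ r.support := by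
  cases w with
  | nil => exact absurd hw (Walk.IsCycle.not_of_nil)
  | cons ha q =>
    rename_i x₀
    have hqrev : ¬ q.reverse.Nil := fun hn => ha.ne hn.eq
    obtain ⟨y₀, hb, r, hqr⟩ := Walk.not_nil_iff.mp hqrev
    have hqsupnodup : q.support.Nodup := by
      have := hw.2
      simpa using this
    have hcr : c ∉ r.support := by
      have h1 : q.support.reverse = c :: r.support := by
        rw [← Walk.support_reverse, hqr, Walk.support_cons]
      have : q.support.reverse.Nodup := List.nodup_reverse.mpr hqsupnodup
      rw [h1] at this
      exact (List.nodup_cons.mp this).1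
    have hedge : s(c, y₀) ∈ q.edges := by
      have : s(c, y₀) ∈ q.reverse.edges := by rw [hqr]; simp
      simpa using this
    have hxy : x₀ ≠ y₀ := by
      rintro rfl
      have := hw.1.1.edges_nodup
      rw [Walk.edges_cons] at this
      exact (List.nodup_cons.mp this).1 hedge
    exact ⟨x₀, y₀, ha, hb, hxy, r, hcr⟩

/-- deleting a vertex with at most one neighbour preserves acyclicity. -/
private lemma acyclic_del (B : SimpleGraph {x : α // x ≠ c})
    (hB : ∀ x y : {x : α // x ≠ c}, B.Adj x y ↔ A.Adj ↑x ↑y)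
    (hc1 : ∀ x y, A.Adj c x → A.Adj c y → x = y) :
    A.IsAcyclic ↔ B.IsAcyclic := by
  constructor
  · intro hA u w hw
    have hf : Function.Injective (fun x : {x : α // x ≠ c} => (x : α)) :=
      Subtype.val_injective
    exact hA (w.map ⟨Subtype.val, fun h => (hB _ _).mp h⟩) (hw.map hf)
  · intro hBac u w hw
    classical
    by_cases hcmem : c ∈ w.support
    · obtain ⟨x, y, hx, hy, hxy, _⟩ := cycle_decomp (w.rotate _ hcmem) (hw.rotate hcmem)
      exact hxy (hc1 x y hx hy)
    · have hns : ∀ x ∈ w.support, x ≠ c := fun x hx he => hcmem (he ▸ hx)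
      have hu : u ≠ c := hns u w.start_mem_support
      have hcyc := liftW_isCycle w hw hu hns
      have hg : Function.Injective (fun x : {x : α // x ≠ c} => x) := fun a b h => h
      exact hBac ((liftW w hu hu hns).map ⟨id, fun h => (hB _ _).mpr h⟩) (hcyc.map hg)

/-- subdividing / contracting an edge at a degree-two vertex preserves acyclicity. -/
private lemma acyclic_subdiv (a b : α) (hab : a ≠ b) (hnadj : ¬ A.Adj a b)
    (hca : A.Adj c a) (hcb : A.Adj c b)
    (hc : ∀ z, A.Adj c z → z = a ∨ z = b)
    (B : SimpleGraph {x : α // x ≠ c})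
    (hB : ∀ x y : {x : α // x ≠ c}, B.Adj x y ↔
      (A.Adj ↑x ↑y ∨ ((x:α) = a ∧ (y:α) = b) ∨ ((x:α) = b ∧ (y:α) = a))) :
    A.IsAcyclic ↔ B.IsAcyclic := by
  have hac : a ≠ c := hca.ne'
  have hbc : b ≠ c := hcb.ne'
  set a' : {x : α // x ≠ c} := ⟨a, hac⟩ with ha'
  set b' : {x : α // x ≠ c} := ⟨b, hbc⟩ with hb'
  -- edges of B other than s(a', b') are A-edges
  have hBedge : ∀ (x y : {x : α // x ≠ c}), B.Adj x y → s(x, y) ≠ s(a', b') →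
      A.Adj ↑x ↑y := by
    intro x y hxy hne
    rcases (hB x y).mp hxy with h | ⟨h1, h2⟩ | ⟨h1, h2⟩
    · exact h
    · exact absurd (by rw [show x = a' from Subtype.ext h1, show y = b' from Subtype.ext h2]) hne
    · exact absurd (by rw [show x = b' from Subtype.ext h1, show y = a' from Subtype.ext h2,
        Sym2.eq_swap]) hne
  constructor
  · intro hA
    intro u w hw
    classical
    by_cases he : s(a', b') ∈ w.edges
    · -- get a walk from a' to b' in B avoiding the new edge
      have hreach := (SimpleGraph.adj_and_reachable_delete_edges_iff_exists_cycle.mpr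
        ⟨u, w, hw, he⟩).2
      obtain ⟨p, hp⟩ := SimpleGraph.reachable_delete_edges_iff_exists_walk.mp hreach
      -- transfer p to the comap graph
      have hpe : ∀ e ∈ p.edges, e ∈ (A.comap (Subtype.val : {x : α // x ≠ c} → α)).edgeSet := by
        intro e hee
        have hBe : e ∈ B.edgeSet := p.edges_subset_edgeSet hee
        have hne : e ≠ s(a', b') := fun h => hp (h ▸ hee)
        revert hBe hne
        refine e.ind (fun x y hBe hne => ?_)
        exact hBedge x y hBe hne
      set q : A.Walk a b := (p.transfer _ hpe).map (homOut A c) with hqdef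
      -- q : A.Walk a b ; build a cycle in A through c
      have hcq : ∀ z ∈ q.support, z ≠ c := by
        intro z hz
        have hz' : z ∈ ((p.transfer _ hpe).map (homOut A c)).support := hz
        rw [Walk.support_map] at hz'
        obtain ⟨z', _, rfl⟩ := List.mem_map.mp hz'
        exact z'.2
      have hW : s(c, a) ∉ (Walk.cons hcb q.reverse).edges := by
        rw [Walk.edges_cons]
        intro hmem
        rcases List.mem_cons.mp hmem with h | h
        · rw [Sym2.congr_right] at h
          exact hab h
        · have := Walk.fst_mem_support_of_mem_edges _ h
          rw [Walk.support_reverse, List.mem_reverse] at this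
          exact hcq c this rfl
      have hreach2 : (A \ SimpleGraph.fromEdgeSet {s(c, a)}).Reachable c a :=
        SimpleGraph.reachable_delete_edges_iff_exists_walk.mpr ⟨Walk.cons hcb q.reverse, hW⟩
      obtain ⟨u', cyc, hcyc, _⟩ :=
        SimpleGraph.adj_and_reachable_delete_edges_iff_exists_cycle.mp ⟨hca, hreach2⟩
      exact hA cyc hcyc
    · -- all edges of w are A-edges
      have hpe : ∀ e ∈ w.edges, e ∈ (A.comap (Subtype.val : {x : α // x ≠ c} → α)).edgeSet := by
        intro e hee
        have hBe : e ∈ B.edgeSet := w.edges_subset_edgeSet hee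
        have hne : e ≠ s(a', b') := fun h => he (h ▸ hee)
        revert hBe hne
        refine e.ind (fun x y hBe hne => ?_)
        exact hBedge x y hBe hne
      have hcyc : ((w.transfer _ hpe).map (homOut A c)).IsCycle :=
        (hw.transfer hpe).map Subtype.val_injective
      exact hA _ hcyc
  · intro hBac u w hw
    classical
    by_cases hcmem : c ∈ w.support
    · obtain ⟨x, y, hx, hy, hxy, r, hcr⟩ := cycle_decomp (w.rotate _ hcmem) (hw.rotate hcmem)
      have hns : ∀ z ∈ r.support, z ≠ c := fun z hz hzc => hcr (hzc ▸ hz)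
      have hyc : y ≠ c := hy.ne'
      have hxc : x ≠ c := hx.ne'
      -- lift r to B
      have hginj : Function.Injective (fun x : {x : α // x ≠ c} => x) := fun p q h => h
      set W := ((liftW r hyc hxc hns).map
        ⟨id, fun h => (hB _ _).mpr (Or.inl h)⟩ : B.Walk ⟨y, hyc⟩ ⟨x, hxc⟩) with hWdef
      have hWedges : s(a', b') ∉ W.edges := by
        intro hmem
        rw [hWdef, Walk.edges_map] at hmem
        obtain ⟨e', he', heq⟩ := List.mem_map.mp hmem
        have : e' ∈ (A.comap (Subtype.val : {x : α // x ≠ c} → α)).edgeSet :=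
          Walk.edges_subset_edgeSet _ he'
        have he'eq : e' = s(a', b') := by
          rw [← heq]
          induction e' using Sym2.ind with
          | _ p q => rfl
        rw [he'eq] at this
        exact hnadj this
      -- cases on which of x,y is a
      rcases hc x hx with rfl | rfl
      · -- x = a, so y = b
        have : y = b := (hc y hy).resolve_left (fun h => hxy h.symm)
        subst this
        have hadj' : B.Adj a' b' := (hB _ _).mpr (Or.inr (Or.inl ⟨rfl, rfl⟩))
        have hreach : (B \ SimpleGraph.fromEdgeSet {s(a', b')}).Reachable a' b' := by
          refine SimpleGraph.reachable_delete_edges_iff_exists_walk.mpr ⟨W.reverse, ?_⟩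
          rw [Walk.edges_reverse, List.mem_reverse]
          exact hWedges
        obtain ⟨u', cyc, hcyc, _⟩ :=
          SimpleGraph.adj_and_reachable_delete_edges_iff_exists_cycle.mp ⟨hadj', hreach⟩
        exact hBac cyc hcyc
      · -- x = b, so y = a
        have : y = a := (hc y hy).resolve_right (fun h => hxy h.symm)
        subst this
        have hadj' : B.Adj a' b' := (hB _ _).mpr (Or.inr (Or.inl ⟨rfl, rfl⟩))
        have hreach : (B \ SimpleGraph.fromEdgeSet {s(a', b')}).Reachable a' b' :=
          SimpleGraph.reachable_delete_edges_iff_exists_walk.mpr ⟨W, hWedges⟩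
        obtain ⟨u', cyc, hcyc, _⟩ :=
          SimpleGraph.adj_and_reachable_delete_edges_iff_exists_cycle.mp ⟨hadj', hreach⟩
        exact hBac cyc hcyc
    · have hns : ∀ x ∈ w.support, x ≠ c := fun x hx he => hcmem (he ▸ hx)
      have hu : u ≠ c := hns u w.start_mem_support
      have hcyc := liftW_isCycle w hw hu hns
      have hg : Function.Injective (fun x : {x : α // x ≠ c} => x) := fun p q h => h
      exact hBac ((liftW w hu hu hns).map ⟨id, fun h => (hB _ _).mpr (Or.inl h)⟩) (hcyc.map hg)

private lemma acyclic_of_hom' {α β : Type*} {A : SimpleGraph α} {B : SimpleGraph β}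
    (f : A →g B) (hf : Function.Injective f) (h : B.IsAcyclic) : A.IsAcyclic :=
  fun _ w hw => h (w.map f) (hw.map hf)

private lemma main_acyc {V : Type*} (G : SimpleGraph V) (c a b : V)
    (hab : a ≠ b) (hac : a ≠ c) (hbc : b ≠ c)
    (hnadj : ¬ G.Adj a b) (hnb : G.neighborSet c = {a, b})
    (G' : SimpleGraph {x : V // x ≠ c})
    (hG' : ∀ x y : {x : V // x ≠ c}, G'.Adj x y ↔
      (G.Adj ↑x ↑y ∨ ((x:V) = a ∧ (y:V) = b) ∨ ((x:V) = b ∧ (y:V) = a)))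
    (S : Set V) (hcS : c ∉ S) :
    (G.induce Sᶜ).IsAcyclic ↔ (G'.induce {x : {x : V // x ≠ c} | ↑x ∈ S}ᶜ).IsAcyclic := by
  set A : SimpleGraph ↥(Sᶜ) := G.induce Sᶜ with hA
  have hcSc : c ∈ Sᶜ := hcS
  set c' : ↥(Sᶜ) := ⟨c, hcSc⟩ with hc'
  set S' : Set {x : V // x ≠ c} := {x : {x : V // x ≠ c} | ↑x ∈ S} with hS'
  -- the map between the two vertex types
  set φ : {x : ↥(Sᶜ) // x ≠ c'} → ↥(S'ᶜ) := fun x =>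
    ⟨⟨(x : ↥(Sᶜ)), fun h => x.2 (Subtype.ext h)⟩, fun h => ((x : ↥(Sᶜ)).2 : ↑↑x ∉ S) h⟩ with hφ
  set ψ : ↥(S'ᶜ) → {x : ↥(Sᶜ) // x ≠ c'} := fun y =>
    ⟨⟨(y : {x : V // x ≠ c}), (y.2 : ¬ _)⟩, fun h => (y : {x : V // x ≠ c}).2 (congrArg Subtype.val h)⟩ with hψ
  set B : SimpleGraph {x : ↥(Sᶜ) // x ≠ c'} := (G'.induce S'ᶜ).comap φ with hB
  have hφψ : ∀ y, φ (ψ y) = y := fun y => Subtype.ext (Subtype.ext rfl)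
  have hφinj : Function.Injective φ := by
    intro x y h
    have h2 : ((x : ↥(Sᶜ)) : V) = ((y : ↥(Sᶜ)) : V) :=
      congrArg (fun z : ↥(S'ᶜ) => ((z : {x : V // x ≠ c}) : V)) h
    exact Subtype.ext (Subtype.ext h2)
  -- adjacency of B unfolded
  have hBadj : ∀ x y : {x : ↥(Sᶜ) // x ≠ c'}, B.Adj x y ↔
      (G.Adj ↑↑x ↑↑y ∨ ((↑↑x : V) = a ∧ (↑↑y : V) = b) ∨ ((↑↑x : V) = b ∧ (↑↑y : V) = a)) := by
    intro x y
    rw [hB]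
    exact hG' _ _
  have hBiff : B.IsAcyclic ↔ (G'.induce S'ᶜ).IsAcyclic := by
    constructor
    · intro h
      refine acyclic_of_hom' ⟨ψ, ?_⟩ (fun x y hxy => ?_) h
      · intro x y hxy
        have : B.Adj (ψ x) (ψ y) := by
          rw [hB]
          show (G'.induce S'ᶜ).Adj (φ (ψ x)) (φ (ψ y))
          rw [hφψ, hφψ]
          exact hxy
        exact this
      · have h2 : (((x : {x : V // x ≠ c})) : V) = (((y : {x : V // x ≠ c})) : V) :=
          congrArg (fun z : {x : ↥(Sᶜ) // x ≠ c'} => (((z : ↥(Sᶜ))) : V)) hxy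
        exact Subtype.ext (Subtype.ext h2)
    · intro h
      exact acyclic_of_hom' ⟨φ, fun hadj => hadj⟩ hφinj h
  rw [← hBiff]
  -- now compare A and B
  have hAadj : ∀ x y : ↥(Sᶜ), A.Adj x y ↔ G.Adj ↑x ↑y := fun x y => Iff.rfl
  by_cases haS : a ∈ S
  · -- the vertex a is deleted; c' has at most one neighbour in A
    refine acyclic_del (A := A) (c := c') B (fun x y => ?_) (fun x y hx hy => ?_)
    · rw [hBadj]
      constructor
      · rintro (h | ⟨h1, h2⟩ | ⟨h1, h2⟩)
        · exact h
        · exact absurd (h1 ▸ (x : ↥(Sᶜ)).2) (fun hh => hh haS)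
        · exact absurd (h2 ▸ (y : ↥(Sᶜ)).2) (fun hh => hh haS)
      · exact fun h => Or.inl h
    · -- both neighbours must be b
      have hx' : (↑↑x : V) ∈ G.neighborSet c := hx
      have hy' : (↑↑y : V) ∈ G.neighborSet c := hy
      rw [hnb] at hx' hy'
      have hxb : (↑↑x : V) = b := by
        rcases hx' with h | h
        · exact absurd (h ▸ (x : ↥(Sᶜ)).2) (fun hh => hh haS)
        · exact h
      have hyb : (↑↑y : V) = b := by
        rcases hy' with h | h
        · exact absurd (h ▸ (y : ↥(Sᶜ)).2) (fun hh => hh haS)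
        · exact h
      exact Subtype.ext (hxb.trans hyb.symm)
  · by_cases hbS : b ∈ S
    · refine acyclic_del (A := A) (c := c') B (fun x y => ?_) (fun x y hx hy => ?_)
      · rw [hBadj]
        constructor
        · rintro (h | ⟨h1, h2⟩ | ⟨h1, h2⟩)
          · exact h
          · exact absurd (h2 ▸ (y : ↥(Sᶜ)).2) (fun hh => hh hbS)
          · exact absurd (h1 ▸ (x : ↥(Sᶜ)).2) (fun hh => hh hbS)
        · exact fun h => Or.inl h
      · have hx' : (↑↑x : V) ∈ G.neighborSet c := hx
        have hy' : (↑↑y : V) ∈ G.neighborSet c := hy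
        rw [hnb] at hx' hy'
        have hxa : (↑↑x : V) = a := by
          rcases hx' with h | h
          · exact h
          · exact absurd (h ▸ (x : ↥(Sᶜ)).2) (fun hh => hh hbS)
        have hya : (↑↑y : V) = a := by
          rcases hy' with h | h
          · exact h
          · exact absurd (h ▸ (y : ↥(Sᶜ)).2) (fun hh => hh hbS)
        exact Subtype.ext (hxa.trans hya.symm)
    · -- both a and b survive
      have haSc : a ∈ Sᶜ := haS
      have hbSc : b ∈ Sᶜ := hbS
      refine acyclic_subdiv (A := A) (c := c') ⟨a, haSc⟩ ⟨b, hbSc⟩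
        (fun h => hab (congrArg Subtype.val h)) hnadj
        (show G.Adj c a from (hnb ▸ (Set.mem_insert a {b}) : a ∈ G.neighborSet c))
        (show G.Adj c b from (hnb ▸ (Set.mem_insert_of_mem a rfl) : b ∈ G.neighborSet c))
        (fun z hz => ?_) B (fun x y => ?_)
      · have : (↑z : V) ∈ G.neighborSet c := hz
        rw [hnb] at this
        rcases this with h | h
        · exact Or.inl (Subtype.ext h)
        · exact Or.inr (Subtype.ext h)
      · rw [hBadj]
        constructor
        · rintro (h | ⟨h1, h2⟩ | ⟨h1, h2⟩)
          · exact Or.inl h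
          · exact Or.inr (Or.inl ⟨Subtype.ext h1, Subtype.ext h2⟩)
          · exact Or.inr (Or.inr ⟨Subtype.ext h1, Subtype.ext h2⟩)
        · rintro (h | ⟨h1, h2⟩ | ⟨h1, h2⟩)
          · exact Or.inl h
          · exact Or.inr (Or.inl ⟨congrArg Subtype.val h1, congrArg Subtype.val h2⟩)
          · exact Or.inr (Or.inr ⟨congrArg Subtype.val h1, congrArg Subtype.val h2⟩)

end helpers

/-- contracting a degree-two-path `v₀v₁…v_h` (`h ≥ 4`) by removing `v₂`
and adding the edge `v₁v₃` preserves the existence of a cPP-set of size at most `k`. -/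
theorem stmt13 {V : Type*} [Fintype V] (G : SimpleGraph V) (h : ℕ) (hh : 4 ≤ h)
    (v : ℕ → V)
    (hadj : ∀ i < h, G.Adj (v i) (v (i + 1)))
    (hinj : ∀ i ≤ h, ∀ j ≤ h, v i = v j → i = j ∨ (i = 0 ∧ j = h) ∨ (i = h ∧ j = 0))
    (hend0 : (G.neighborSet (v 0)).ncard ≠ 2) (hendh : (G.neighborSet (v h)).ncard ≠ 2)
    (hmid : ∀ i, 0 < i → i < h → (G.neighborSet (v i)).ncard = 2)
    (k : ℕ)
    (G' : SimpleGraph {x : V // x ≠ v 2})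
    (hG' : ∀ a b : {x : V // x ≠ v 2}, G'.Adj a b ↔
      (G.Adj ↑a ↑b ∨ ((a : V) = v 1 ∧ (b : V) = v 3) ∨ ((a : V) = v 3 ∧ (b : V) = v 1))) :
    (∃ S : Set V, S.ncard ≤ k ∧ (∀ x ∉ S, {w | G.Adj x w ∧ w ∉ S}.ncard ≤ 2) ∧
        (G.induce Sᶜ).IsAcyclic) ↔
    (∃ S : Set {x : V // x ≠ v 2}, S.ncard ≤ k ∧
        (∀ x ∉ S, {w | G'.Adj x w ∧ w ∉ S}.ncard ≤ 2) ∧ (G'.induce Sᶜ).IsAcyclic) := by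
  classical
  -- distinctness of the path vertices
  have hvne : ∀ i j : ℕ, j ≤ h → i < j → ¬(i = 0 ∧ j = h) → v i ≠ v j := by
    intro i j hj hij hnot he
    rcases hinj i (le_trans (le_of_lt hij) hj) j hj he with h1 | h1 | h1 <;> omega
  have hv02 : v 0 ≠ v 2 := hvne 0 2 (by omega) (by omega) (by omega)
  have hv12 : v 1 ≠ v 2 := hvne 1 2 (by omega) (by omega) (by omega)
  have hv13 : v 1 ≠ v 3 := hvne 1 3 (by omega) (by omega) (by omega)
  have hv23 : v 2 ≠ v 3 := hvne 2 3 (by omega) (by omega) (by omega)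
  have hv03 : v 0 ≠ v 3 := hvne 0 3 (by omega) (by omega) (by omega)
  have hv24 : v 2 ≠ v 4 := hvne 2 4 (by omega) (by omega) (by omega)
  have hadj01 : G.Adj (v 0) (v 1) := hadj 0 (by omega)
  have hadj12 : G.Adj (v 1) (v 2) := hadj 1 (by omega)
  have hadj23 : G.Adj (v 2) (v 3) := hadj 2 (by omega)
  have hadj34 : G.Adj (v 3) (v 4) := hadj 3 (by omega)
  -- neighbourhoods of the inner vertices
  have pairEq : ∀ x y z : V, y ≠ z → G.Adj x y → G.Adj x z →
      (G.neighborSet x).ncard = 2 → G.neighborSet x = {y, z} := by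
    intro x y z hyz hxy hxz hcard
    refine (Set.eq_of_subset_of_ncard_le ?_ ?_ (Set.toFinite _)).symm
    · rintro w (rfl | rfl)
      · exact hxy
      · exact hxz
    · rw [hcard, Set.ncard_pair hyz]
  have hnb1 : G.neighborSet (v 1) = {v 0, v 2} :=
    pairEq _ _ _ hv02 hadj01.symm hadj12 (hmid 1 (by omega) (by omega))
  have hnb2 : G.neighborSet (v 2) = {v 1, v 3} :=
    pairEq _ _ _ hv13 hadj12.symm hadj23 (hmid 2 (by omega) (by omega))
  have hnb3 : G.neighborSet (v 3) = {v 2, v 4} :=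
    pairEq _ _ _ hv24 hadj23.symm hadj34 (hmid 3 (by omega) (by omega))
  have hnadj13 : ¬ G.Adj (v 1) (v 3) := by
    intro hA
    have : v 3 ∈ G.neighborSet (v 1) := hA
    rw [hnb1] at this
    rcases this with h1 | h1
    · exact hv03 h1.symm
    · exact hv23 h1.symm
  have degle2 : ∀ (x : V) (T : Set V), (G.neighborSet x).ncard = 2 →
      {w | G.Adj x w ∧ w ∉ T}.ncard ≤ 2 := by
    intro x T hx
    calc {w | G.Adj x w ∧ w ∉ T}.ncard ≤ (G.neighborSet x).ncard :=
          Set.ncard_le_ncard (fun w hw => hw.1) (Set.toFinite _)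
      _ = 2 := hx
  constructor
  · rintro ⟨S, hSk, hSdeg, hSacyc⟩
    -- Step 1: find a solution avoiding v 2
    obtain ⟨T, hTk, hTdeg, hTacyc, hTc⟩ :
        ∃ T : Set V, T.ncard ≤ k ∧ (∀ x ∉ T, {w | G.Adj x w ∧ w ∉ T}.ncard ≤ 2) ∧
          (G.induce Tᶜ).IsAcyclic ∧ v 2 ∉ T := by
      by_cases hc2 : v 2 ∈ S
      · set T := insert (v 1) (S \ {v 2}) with hT
        have hv1T : v 1 ∈ T := Set.mem_insert _ _
        have hv2T : v 2 ∉ T := by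
          intro hmem
          rcases Set.mem_insert_iff.mp hmem with h1 | h1
          · exact hv12 h1.symm
          · exact h1.2 rfl
        have hsub : ∀ x, x ∈ S → x ≠ v 2 → x ∈ T := fun x hx hne =>
          Set.mem_insert_of_mem _ ⟨hx, hne⟩
        refine ⟨T, ?_, ?_, ?_, hv2T⟩
        · calc T.ncard ≤ (S \ {v 2}).ncard + 1 := Set.ncard_insert_le _ _
            _ = S.ncard := Set.ncard_diff_singleton_add_one hc2 (Set.toFinite _)
            _ ≤ k := hSk
        · intro x hxT
          by_cases hx2 : x = v 2
          · subst hx2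
            have hsub2 : {w | G.Adj (v 2) w ∧ w ∉ T} ⊆ {v 3} := by
              rintro w ⟨haw, hwT⟩
              have : w ∈ G.neighborSet (v 2) := haw
              rw [hnb2] at this
              rcases this with h1 | h1
              · exact absurd (h1 ▸ hv1T) hwT
              · exact h1
            calc {w | G.Adj (v 2) w ∧ w ∉ T}.ncard ≤ ({v 3} : Set V).ncard :=
                  Set.ncard_le_ncard hsub2 (Set.toFinite _)
              _ ≤ 2 := by rw [Set.ncard_singleton]; omega
          · by_cases hx3 : x = v 3
            · subst hx3; exact degle2 _ _ (hmid 3 (by omega) (by omega))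
            · have hx1 : x ≠ v 1 := fun he => hxT (he ▸ hv1T)
              have hxS : x ∉ S := fun hxS => hxT (hsub x hxS hx2)
              have hsub2 : {w | G.Adj x w ∧ w ∉ T} ⊆ {w | G.Adj x w ∧ w ∉ S} := by
                rintro w ⟨haw, hwT⟩
                refine ⟨haw, fun hwS => ?_⟩
                by_cases hw2 : w = v 2
                · subst hw2
                  have : x ∈ G.neighborSet (v 2) := haw.symm
                  rw [hnb2] at this
                  rcases this with h1 | h1
                  · exact hx1 h1
                  · exact hx3 h1
                · exact hwT (hsub w hwS hw2)
              calc {w | G.Adj x w ∧ w ∉ T}.ncard ≤ {w | G.Adj x w ∧ w ∉ S}.ncard :=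
                    Set.ncard_le_ncard hsub2 (Set.toFinite _)
                _ ≤ 2 := hSdeg x hxS
        · -- acyclicity of the new induced graph
          intro u w hw
          have hv2Tc : v 2 ∈ Tᶜ := hv2T
          set c' : ↥(Tᶜ) := ⟨v 2, hv2Tc⟩ with hc'
          by_cases hcm : c' ∈ w.support
          · obtain ⟨x, y, hx, hy, hxy, -⟩ := cycle_decomp (w.rotate _ hcm) (hw.rotate hcm)
            have hx3 : (↑x : V) = v 3 := by
              have : (↑x : V) ∈ G.neighborSet (v 2) := hx
              rw [hnb2] at this
              rcases this with h1 | h1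
              · exact absurd (h1 ▸ x.2) (fun hh => hh hv1T)
              · exact h1
            have hy3 : (↑y : V) = v 3 := by
              have : (↑y : V) ∈ G.neighborSet (v 2) := hy
              rw [hnb2] at this
              rcases this with h1 | h1
              · exact absurd (h1 ▸ y.2) (fun hh => hh hv1T)
              · exact h1
            exact hxy (Subtype.ext (hx3.trans hy3.symm))
          · have hns : ∀ z ∈ w.support, z ≠ c' := fun z hz he => hcm (he ▸ hz)
            have hu : u ≠ c' := hns u w.start_mem_support
            have hcyc := liftW_isCycle w hw hu hns
            have hmemS : ∀ z : {z : ↥(Tᶜ) // z ≠ c'}, (↑↑z : V) ∈ Sᶜ := by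
              intro z
              intro hzS
              have hzT : (↑↑z : V) ∉ T := (z : ↥(Tᶜ)).2
              have hz2 : (↑↑z : V) ≠ v 2 := fun he => z.2 (Subtype.ext he)
              exact hzT (hsub _ hzS hz2)
            have hf : Function.Injective
                (fun z : {z : ↥(Tᶜ) // z ≠ c'} => (⟨↑↑z, hmemS z⟩ : ↥(Sᶜ))) := by
              intro p q hpq
              have h2 : (↑↑p : V) = ↑↑q := congrArg (fun t : ↥(Sᶜ) => (t : V)) hpq
              exact Subtype.ext (Subtype.ext h2)
            exact hSacyc _ (hcyc.map (f := ⟨fun z => ⟨↑↑z, hmemS z⟩, fun ha => ha⟩) hf)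
      · exact ⟨S, hSk, hSdeg, hSacyc, hc2⟩
    -- Step 2: transfer to G'
    refine ⟨{x : {x : V // x ≠ v 2} | ↑x ∈ T}, ?_, ?_, ?_⟩
    · have him : Subtype.val '' {x : {x : V // x ≠ v 2} | ↑x ∈ T} ⊆ T := by
        rintro w ⟨w', hw', rfl⟩; exact hw'
      calc ({x : {x : V // x ≠ v 2} | ↑x ∈ T}).ncard
          = (Subtype.val '' {x : {x : V // x ≠ v 2} | ↑x ∈ T}).ncard :=
            (Set.ncard_image_of_injective _ Subtype.val_injective).symm
        _ ≤ T.ncard := Set.ncard_le_ncard him (Set.toFinite _)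
        _ ≤ k := hTk
    · intro x hx
      by_cases hxa : (↑x : V) = v 1
      · have hsub2 : {w | G'.Adj x w ∧ w ∉ {x : {x : V // x ≠ v 2} | ↑x ∈ T}} ⊆
            {(⟨v 0, fun he => hv02 he⟩ : {x : V // x ≠ v 2}), ⟨v 3, fun he => hv23 he.symm⟩} := by
          rintro w ⟨haw, -⟩
          rcases (hG' x w).mp haw with h1 | ⟨h1, h2⟩ | ⟨h1, h2⟩
          · have : (↑w : V) ∈ G.neighborSet (v 1) := hxa ▸ h1
            rw [hnb1] at this
            rcases this with h2 | h2
            · exact Or.inl (Subtype.ext h2)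
            · exact absurd h2 w.2
          · exact Or.inr (Subtype.ext h2)
          · exact absurd (hxa.symm.trans h1) hv13
        calc _ ≤ _ := Set.ncard_le_ncard hsub2 (Set.toFinite _)
          _ ≤ 2 := by
            calc _ ≤ _ := Set.ncard_insert_le _ _
              _ ≤ 2 := by rw [Set.ncard_singleton]
      · by_cases hxb : (↑x : V) = v 3
        · have hsub2 : {w | G'.Adj x w ∧ w ∉ {x : {x : V // x ≠ v 2} | ↑x ∈ T}} ⊆
              {(⟨v 4, fun he => hv24 he.symm⟩ : {x : V // x ≠ v 2}),
               ⟨v 1, fun he => hv12 he⟩} := by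
            rintro w ⟨haw, -⟩
            rcases (hG' x w).mp haw with h1 | ⟨h1, h2⟩ | ⟨h1, h2⟩
            · have : (↑w : V) ∈ G.neighborSet (v 3) := hxb ▸ h1
              rw [hnb3] at this
              rcases this with h2 | h2
              · exact absurd h2 w.2
              · exact Or.inl (Subtype.ext h2)
            · exact absurd (h1.symm.trans hxb) hv13
            · exact Or.inr (Subtype.ext h2)
          calc _ ≤ _ := Set.ncard_le_ncard hsub2 (Set.toFinite _)
            _ ≤ 2 := by
              calc _ ≤ _ := Set.ncard_insert_le _ _
                _ ≤ 2 := by rw [Set.ncard_singleton]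
        · have hsub2 : Subtype.val '' {w | G'.Adj x w ∧ w ∉ {x : {x : V // x ≠ v 2} | ↑x ∈ T}} ⊆
              {w | G.Adj ↑x w ∧ w ∉ T} := by
            rintro w ⟨w', ⟨haw, hwT⟩, rfl⟩
            rcases (hG' x w').mp haw with h1 | ⟨h1, h2⟩ | ⟨h1, h2⟩
            · exact ⟨h1, hwT⟩
            · exact absurd h1 hxa
            · exact absurd h1 hxb
          calc {w | G'.Adj x w ∧ w ∉ {x : {x : V // x ≠ v 2} | ↑x ∈ T}}.ncard
              = (Subtype.val '' {w | G'.Adj x w ∧ w ∉ {x : {x : V // x ≠ v 2} | ↑x ∈ T}}).ncard :=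
                (Set.ncard_image_of_injective _ Subtype.val_injective).symm
            _ ≤ {w | G.Adj ↑x w ∧ w ∉ T}.ncard := Set.ncard_le_ncard hsub2 (Set.toFinite _)
            _ ≤ 2 := hTdeg _ hx
    · exact (main_acyc G (v 2) (v 1) (v 3) hv13 hv12 (fun he => hv23 he.symm)
        hnadj13 hnb2 G' hG' T hTc).mp hTacyc
  · rintro ⟨S', hk', hdeg', hacyc'⟩
    set S : Set V := Subtype.val '' S' with hS
    have hc2S : v 2 ∉ S := by rintro ⟨w, -, hw⟩; exact w.2 hw
    refine ⟨S, ?_, ?_, ?_⟩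
    · rw [hS, Set.ncard_image_of_injective _ Subtype.val_injective]; exact hk'
    · intro x hxS
      by_cases hx1 : x = v 1
      · subst hx1; exact degle2 _ _ (hmid 1 (by omega) (by omega))
      · by_cases hx2 : x = v 2
        · subst hx2; exact degle2 _ _ (hmid 2 (by omega) (by omega))
        · by_cases hx3 : x = v 3
          · subst hx3; exact degle2 _ _ (hmid 3 (by omega) (by omega))
          · set x' : {x : V // x ≠ v 2} := ⟨x, hx2⟩ with hx'
            have hx'S' : x' ∉ S' := fun hmem => hxS ⟨x', hmem, rfl⟩
            have hEq : {w | G.Adj x w ∧ w ∉ S} =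
                Subtype.val '' {w : {x : V // x ≠ v 2} | G.Adj x ↑w ∧ ↑w ∉ S} := by
              ext w
              constructor
              · rintro ⟨haw, hwS⟩
                have hw2 : w ≠ v 2 := by
                  intro he
                  subst he
                  have : x ∈ G.neighborSet (v 2) := haw.symm
                  rw [hnb2] at this
                  rcases this with h1 | h1
                  · exact hx1 h1
                  · exact hx3 h1
                exact ⟨⟨w, hw2⟩, ⟨haw, hwS⟩, rfl⟩
              · rintro ⟨w', ⟨haw, hwS⟩, rfl⟩; exact ⟨haw, hwS⟩
            have hsub2 : {w : {x : V // x ≠ v 2} | G.Adj x ↑w ∧ ↑w ∉ S} ⊆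
                {w | G'.Adj x' w ∧ w ∉ S'} := by
              rintro w ⟨haw, hwS⟩
              exact ⟨(hG' x' w).mpr (Or.inl haw), fun hmem => hwS ⟨w, hmem, rfl⟩⟩
            calc {w | G.Adj x w ∧ w ∉ S}.ncard
                = {w : {x : V // x ≠ v 2} | G.Adj x ↑w ∧ ↑w ∉ S}.ncard := by
                  rw [hEq, Set.ncard_image_of_injective _ Subtype.val_injective]
              _ ≤ {w | G'.Adj x' w ∧ w ∉ S'}.ncard := Set.ncard_le_ncard hsub2 (Set.toFinite _)
              _ ≤ 2 := hdeg' x' hx'S'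
    · have hpre : {x : {x : V // x ≠ v 2} | ↑x ∈ S} = S' := by
        rw [hS]
        exact Set.preimage_image_eq S' Subtype.val_injective
      refine (main_acyc G (v 2) (v 1) (v 3) hv13 hv12 (fun he => hv23 he.symm)
        hnadj13 hnb2 G' hG' S hc2S).mpr ?_
      rw [hpre]
      exact hacyc'
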